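/- arXiv:1407.6973 — 2 statements merged into one kernel-verified Lean document; each statement's English description precedes it below -/
import Mathlib

section
/- Let α, β, N be real numbers with α ∉ {−1,−2,−3,…} and N not a nonnegative integer, let x be a nonnegative integer, and let t be a real number with |t| < 1. Then the series Σ_{n=0}^{∞} R_n^{α,β,N}(λ^{α,β}(x)) t^n converges, and its sum equals (1−t)^{N−x} · Σ_{k=0}^{x} ((−x)_k (−x−β)_k / ((α+1)_k k!)) t^k, where λ^{α,β}(x) = x(x+α+β+1) and (1−t)^{N−x} denotes the real power of the positive number 1−t. -/
open Polynomial Finset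

noncomputable section

/-- Pochhammer symbol `(a)_k = a(a+1)⋯(a+k−1)`. -/
def poch (a : ℝ) (k : ℕ) : ℝ := ∏ i ∈ Finset.range k, (a + i)

/-- The quadratic lattice `λ^{α,β}(x) = x(x+α+β+1)`. -/
def lam (α β x : ℝ) : ℝ := x * (x + α + β + 1)

/-- The dual Hahn polynomial `R_n^{α,β,N}`. -/
def dualHahn (α β N : ℝ) (n : ℕ) : Polynomial ℝ :=
  Polynomial.C ((n.factorial : ℝ))⁻¹ *
    ∑ j ∈ Finset.range (n + 1),
      Polynomial.C ((-1 : ℝ) ^ j * poch (-(n : ℝ)) j * poch (-N + j) (n - j)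
          / (poch (α + 1) j * (j.factorial : ℝ))) *
        ∏ i ∈ Finset.range j, (Polynomial.X - Polynomial.C ((i : ℝ) * (α + β + 1 + i)))

/-- Dual Hahn polynomial with integer index; `R_k = 0` for `k < 0`. -/
def dualHahnZ (α β N : ℝ) (k : ℤ) : Polynomial ℝ :=
  if 0 ≤ k then dualHahn α β N k.toNat else 0

/-- The Hahn polynomial `h_n^{α,β,N}` evaluated at `x`. -/
def hahn (α β N : ℝ) (n : ℕ) (x : ℝ) : ℝ :=
  ∑ j ∈ Finset.range (n + 1),
    poch (-(n : ℝ)) j * poch ((n : ℝ) + α + β + 1) j * poch (-N + j) (n - j) *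
      poch (α + j + 1) (n - j) * poch (-x) j / (j.factorial : ℝ)

/-- The dual Hahn weight `w_{*;α,β,N}(x)`. -/
def dualHahnWeight (α β : ℝ) (N : ℕ) (x : ℕ) : ℝ :=
  (2 * (x : ℝ) + α + β + 1) * poch (α + 1) x * poch (-(N : ℝ)) x * (N.factorial : ℝ) /
    ((-1 : ℝ) ^ x * poch ((x : ℝ) + α + β + 1) (N + 1) * poch (β + 1) x * (x.factorial : ℝ))



lemma poch_zero (a : ℝ) : poch a 0 = 1 := by simp [poch]

lemma poch_succ (a : ℝ) (k : ℕ) : poch a (k + 1) = poch a k * (a + k) := by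
  simp [poch, Finset.prod_range_succ]

lemma poch_succ' (a : ℝ) (k : ℕ) : poch a (k + 1) = a * poch (a + 1) k := by
  simp only [poch, Finset.prod_range_succ']
  rw [mul_comm]
  congr 1
  · simp
  · exact Finset.prod_congr rfl fun i _ => by push_cast; ring

lemma poch_add (a : ℝ) (m n : ℕ) : poch a (m + n) = poch a m * poch (a + m) n := by
  induction n with
  | zero => simp [poch_zero]
  | succ n ih => rw [← add_assoc, poch_succ, ih, poch_succ, mul_assoc]; push_cast; ring_nf

lemma poch_neg_nat (x j : ℕ) : poch (-(x : ℝ)) j = (-1) ^ j * (x.descFactorial j : ℝ) := by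
  induction j with
  | zero => simp [poch_zero]
  | succ j ih =>
    rw [poch_succ, ih, Nat.descFactorial_succ]
    by_cases h : j ≤ x
    · push_cast [Nat.cast_sub h]; ring
    · have : x.descFactorial j = 0 := Nat.descFactorial_eq_zero_iff_lt.2 (by omega)
      simp [this]

/-- Chu-Vandermonde type identity. -/
lemma vandermonde (k : ℕ) : ∀ b c : ℝ,
    ∑ j ∈ Finset.range (k + 1), (-1 : ℝ) ^ j * (k.choose j : ℝ) * poch b j * poch (c + j) (k - j)
      = poch (c - b) k := by
  induction k with
  | zero => intro b c; simp [poch_zero]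
  | succ k ih =>
    intro b c
    have split : ∀ j, ((k + 1).choose (j + 1) : ℝ) = (k.choose j : ℝ) + (k.choose (j + 1) : ℝ) := by
      intro j; rw [Nat.choose_succ_succ]; push_cast; ring
    rw [Finset.sum_range_succ' _ (k + 1)]
    simp only [split]
    have expand : ∀ j ∈ Finset.range (k + 1),
        (-1 : ℝ) ^ (j + 1) * ((k.choose j : ℝ) + (k.choose (j + 1) : ℝ)) * poch b (j + 1) *
            poch (c + (j + 1 : ℕ)) (k + 1 - (j + 1))
          = (-1 : ℝ) ^ (j + 1) * (k.choose j : ℝ) * poch b (j + 1) * poch (c + (j + 1 : ℕ)) (k - j)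
            + (-1 : ℝ) ^ (j + 1) * (k.choose (j + 1) : ℝ) * poch b (j + 1) *
              poch (c + (j + 1 : ℕ)) (k + 1 - (j + 1)) := by
      intro j hj
      have : k + 1 - (j + 1) = k - j := by omega
      rw [this]; ring
    rw [Finset.sum_congr rfl expand, Finset.sum_add_distrib]
    -- second sum B = T - h 0 where T = ∑_{j ≤ k} h j with h j = (-1)^j choose k j poch b j poch (c+j) (k+1-j)
    have hB : (∑ j ∈ Finset.range (k + 1), (-1 : ℝ) ^ (j + 1) * (k.choose (j + 1) : ℝ) *
          poch b (j + 1) * poch (c + ((j : ℕ) + 1 : ℕ)) (k + 1 - (j + 1)))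
        = (∑ j ∈ Finset.range (k + 1), (-1 : ℝ) ^ j * (k.choose j : ℝ) * poch b j *
            poch (c + j) (k + 1 - j)) - poch c (k + 1) := by
      have h2 : ∑ j ∈ Finset.range (k + 2), ((-1 : ℝ) ^ j * (k.choose j : ℝ) * poch b j *
            poch (c + j) (k + 1 - j))
          = (∑ j ∈ Finset.range (k + 1), (-1 : ℝ) ^ (j + 1) * (k.choose (j + 1) : ℝ) *
              poch b (j + 1) * poch (c + ((j : ℕ) + 1 : ℕ)) (k + 1 - (j + 1))) + poch c (k + 1) := by
        rw [Finset.sum_range_succ' _ (k + 1)]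
        push_cast
        simp [poch_zero]
      have h3 : ∑ j ∈ Finset.range (k + 2), ((-1 : ℝ) ^ j * (k.choose j : ℝ) * poch b j *
            poch (c + j) (k + 1 - j))
          = ∑ j ∈ Finset.range (k + 1), ((-1 : ℝ) ^ j * (k.choose j : ℝ) * poch b j *
            poch (c + j) (k + 1 - j)) := by
        rw [Finset.sum_range_succ, Nat.choose_succ_self]; simp
      rw [h3] at h2; linarith
    rw [hB]
    -- now combine A + T
    have hT : ∀ j ∈ Finset.range (k + 1),
        (-1 : ℝ) ^ j * (k.choose j : ℝ) * poch b j * poch (c + j) (k + 1 - j)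
          = (-1 : ℝ) ^ j * (k.choose j : ℝ) * poch b j * ((c + j) * poch (c + 1 + j) (k - j)) := by
      intro j hj
      simp only [Finset.mem_range] at hj
      have h1 : k + 1 - j = (k - j) + 1 := by omega
      rw [h1, poch_succ']
      ring_nf
    have hA : ∀ j ∈ Finset.range (k + 1),
        (-1 : ℝ) ^ (j + 1) * (k.choose j : ℝ) * poch b (j + 1) * poch (c + ((j : ℕ) + 1 : ℕ)) (k - j)
          = -((-1 : ℝ) ^ j * (k.choose j : ℝ) * poch b j * ((b + j) * poch (c + 1 + j) (k - j))) := by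
      intro j hj
      rw [poch_succ]
      push_cast
      rw [show c + ((j:ℝ) + 1) = c + 1 + (j:ℝ) by ring]
      ring
    rw [Finset.sum_congr rfl hA, Finset.sum_congr rfl hT]
    simp only [pow_zero, Nat.choose_zero_right, Nat.cast_one, poch_zero, Nat.cast_zero, add_zero,
      one_mul, Nat.sub_zero, mul_one]
    have hsum : (∑ j ∈ Finset.range (k + 1),
          -((-1 : ℝ) ^ j * (k.choose j : ℝ) * poch b j * ((b + j) * poch (c + 1 + j) (k - j))))
        + ∑ j ∈ Finset.range (k + 1), (-1 : ℝ) ^ j * (k.choose j : ℝ) * poch b j *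
            ((c + j) * poch (c + 1 + j) (k - j))
        = (c - b) * poch (c + 1 - b) k := by
      rw [← Finset.sum_add_distrib]
      have step : ∀ j ∈ Finset.range (k + 1),
          -((-1 : ℝ) ^ j * (k.choose j : ℝ) * poch b j * ((b + j) * poch (c + 1 + j) (k - j)))
            + (-1 : ℝ) ^ j * (k.choose j : ℝ) * poch b j * ((c + j) * poch (c + 1 + j) (k - j))
          = (c - b) * ((-1 : ℝ) ^ j * (k.choose j : ℝ) * poch b j * poch (c + 1 + j) (k - j)) := by
        intro j _; ring
      rw [Finset.sum_congr rfl step, ← Finset.mul_sum, ih b (c + 1)]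
    have hp : poch (c - b) (k + 1) = (c - b) * poch (c + 1 - b) k := by
      rw [poch_succ']; ring_nf
    linarith


lemma poch_ne_zero_of_ne (a : ℝ) (h : ∀ i : ℕ, a + i ≠ 0) (j : ℕ) : poch a j ≠ 0 :=
  Finset.prod_ne_zero_iff.2 fun i _ => h i

lemma desc_choose_id (x k j : ℕ) (hj : j ≤ k) (hk : k ≤ x) :
    (x.descFactorial j : ℝ) * ((x - j).choose (k - j) : ℝ) * (k.factorial : ℝ)
      = (x.descFactorial k : ℝ) * (k.choose j : ℝ) * (j.factorial : ℝ) := by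
  have e1 : (x - j).choose (k - j) * (k - j).factorial * (x - k).factorial = (x - j).factorial := by
    have := Nat.choose_mul_factorial_mul_factorial (show k - j ≤ x - j by omega)
    rwa [show x - j - (k - j) = x - k by omega] at this
  have e3 : (x - j).factorial * x.descFactorial j = x.factorial :=
    Nat.factorial_mul_descFactorial (by omega)
  have e2 : (x - k).factorial * x.descFactorial k = x.factorial :=
    Nat.factorial_mul_descFactorial hk
  have e4 : k.choose j * j.factorial * (k - j).factorial = k.factorial :=
    Nat.choose_mul_factorial_mul_factorial hj
  have key : (x.descFactorial j) * ((x - j).choose (k - j)) * (k.factorial) *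
        ((k - j).factorial * (x - k).factorial)
      = (x.descFactorial k) * (k.choose j) * (j.factorial) *
        ((k - j).factorial * (x - k).factorial) := by
    calc (x.descFactorial j) * ((x - j).choose (k - j)) * (k.factorial) *
          ((k - j).factorial * (x - k).factorial)
        = ((x - j).choose (k - j) * (k - j).factorial * (x - k).factorial) * x.descFactorial j
            * k.factorial := by ring
      _ = (x - j).factorial * x.descFactorial j * k.factorial := by rw [e1]
      _ = x.factorial * k.factorial := by rw [e3]
      _ = ((x - k).factorial * x.descFactorial k) * (k.choose j * j.factorial * (k - j).factorial) := by
          rw [e2, e4]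
      _ = (x.descFactorial k) * (k.choose j) * (j.factorial) *
            ((k - j).factorial * (x - k).factorial) := by ring
  have hpos : 0 < (k - j).factorial * (x - k).factorial :=
    Nat.mul_pos (Nat.factorial_pos _) (Nat.factorial_pos _)
  have := Nat.eq_of_mul_eq_mul_right hpos key
  exact_mod_cast congrArg (Nat.cast : ℕ → ℝ) this

lemma neg_one_pow_sub (k j : ℕ) (h : j ≤ k) : (-1 : ℝ) ^ (k - j) = (-1) ^ k * (-1) ^ j := by
  have hkj : k + j = (k - j) + 2 * j := by omega
  have : (-1 : ℝ) ^ (k + j) = (-1) ^ (k - j) := by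
    rw [hkj, pow_add, pow_mul]; simp
  rw [← this, pow_add]

lemma coeff_id (α β : ℝ) (hα : ∀ j : ℕ, poch (α + 1) j ≠ 0) (x k : ℕ) (hk : k ≤ x) :
    ∑ j ∈ Finset.range (k + 1),
        ((-1 : ℝ) ^ j * poch (-(x : ℝ)) j * poch ((x : ℝ) + α + β + 1) j /
            (poch (α + 1) j * (j.factorial : ℝ))) *
          ((-1 : ℝ) ^ (k - j) * (((x - j).choose (k - j) : ℕ) : ℝ))
      = poch (-(x : ℝ)) k * poch (-(x : ℝ) - β) k / (poch (α + 1) k * (k.factorial : ℝ)) := by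
  set B : ℝ := (x : ℝ) + α + β + 1 with hB
  have step : ∀ j ∈ Finset.range (k + 1),
      ((-1 : ℝ) ^ j * poch (-(x : ℝ)) j * poch B j /
          (poch (α + 1) j * (j.factorial : ℝ))) *
        ((-1 : ℝ) ^ (k - j) * (((x - j).choose (k - j) : ℕ) : ℝ))
      = (poch (-(x : ℝ)) k / ((k.factorial : ℝ) * poch (α + 1) k)) *
          ((-1 : ℝ) ^ j * (k.choose j : ℝ) * poch B j * poch ((α + 1) + (j : ℝ)) (k - j)) := by
    intro j hj
    simp only [Finset.mem_range] at hj
    have hjk : j ≤ k := by omega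
    have hsplit : poch (α + 1) k = poch (α + 1) j * poch ((α + 1) + (j : ℝ)) (k - j) := by
      have := poch_add (α + 1) j (k - j)
      rwa [show j + (k - j) = k by omega] at this
    have hPj : poch (α + 1) j ≠ 0 := hα j
    have hPj' : poch ((α + 1) + (j : ℝ)) (k - j) ≠ 0 := by
      intro h0; exact hα k (by rw [hsplit, h0, mul_zero])
    have hfj : (j.factorial : ℝ) ≠ 0 := Nat.cast_ne_zero.2 (Nat.factorial_ne_zero j)
    have hfk : (k.factorial : ℝ) ≠ 0 := Nat.cast_ne_zero.2 (Nat.factorial_ne_zero k)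
    have hd := desc_choose_id x k j hjk hk
    rw [poch_neg_nat x j, poch_neg_nat x k, neg_one_pow_sub k j hjk, hsplit]
    field_simp
    have ht : ((-1:ℝ) ^ j) ^ 2 = 1 := by
      rw [← pow_mul, mul_comm, pow_mul]; simp
    linear_combination (poch B j) * hd + ((x.descFactorial j : ℝ) * poch B j *
        ((x - j).choose (k - j) : ℝ) * (k.factorial : ℝ)) * ht
  rw [Finset.sum_congr rfl step, ← Finset.mul_sum, vandermonde k B (α + 1)]
  rw [show (α + 1) - B = -(x : ℝ) - β by rw [hB]; ring]
  ring


lemma summable_poch (a y : ℝ) (hy : |y| < 1) :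
    Summable (fun m : ℕ => poch a m / (m.factorial : ℝ) * y ^ m) := by
  set r : ℝ := (1 + |y|) / 2 with hr
  have hy0 : 0 ≤ |y| := abs_nonneg y
  have hr1 : r < 1 := by rw [hr]; linarith
  have hyr : |y| < r := by rw [hr]; linarith
  have hr0 : 0 < r := by rw [hr]; linarith
  apply summable_of_ratio_norm_eventually_le hr1
  rw [Filter.eventually_atTop]
  refine ⟨⌈2 * |a| / (1 - |y|)⌉₊, fun m hm => ?_⟩
  have hmr : (2 : ℝ) * |a| / (1 - |y|) ≤ m := le_trans (Nat.le_ceil _) (Nat.cast_le.2 hm)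
  have h1y : (0 : ℝ) < 1 - |y| := by linarith
  have hma : 2 * |a| ≤ m * (1 - |y|) := by
    rw [div_le_iff₀ h1y] at hmr; linarith
  have key : |a + m| * |y| ≤ r * (m + 1) := by
    have h1 : |a + m| ≤ |a| + m := by
      calc |a + m| ≤ |a| + |(m : ℝ)| := abs_add_le _ _
        _ = |a| + m := by rw [abs_of_nonneg (by positivity : (0:ℝ) ≤ (m:ℝ))]
    have h2 : |a| * |y| ≤ |a| := by
      nlinarith [abs_nonneg a]
    rw [hr]
    nlinarith [abs_nonneg a, Nat.cast_nonneg (α := ℝ) m]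
  have hstep : poch a (m + 1) / ((m + 1).factorial : ℝ) * y ^ (m + 1)
      = (poch a m / (m.factorial : ℝ) * y ^ m) * ((a + m) * y / (m + 1)) := by
    rw [poch_succ, Nat.factorial_succ, pow_succ]
    push_cast
    field_simp
  rw [hstep, norm_mul]
  rw [mul_comm (r : ℝ) _]
  apply mul_le_mul_of_nonneg_left _ (norm_nonneg _)
  rw [Real.norm_eq_abs, abs_div, abs_mul]
  have hm1 : |((m : ℝ) + 1)| = (m : ℝ) + 1 := abs_of_pos (by positivity)
  rw [hm1, div_le_iff₀ (by positivity : (0:ℝ) < (m:ℝ) + 1)]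
  exact key

def pochSum (a y : ℝ) : ℝ := ∑' m : ℕ, poch a m / (m.factorial : ℝ) * y ^ m

lemma pochSum_zero (a : ℝ) : pochSum a 0 = 1 := by
  rw [pochSum, tsum_eq_single 0 (fun m hm => by
    cases m with
    | zero => exact absurd rfl hm
    | succ m => simp)]
  simp [poch_zero]

lemma pochSum_rec (a y : ℝ) (hy : |y| < 1) :
    HasSum (fun m : ℕ => poch a m / (m.factorial : ℝ) * y ^ m)
      ((1 - y) * pochSum (a + 1) y) := by
  have hF1 : HasSum (fun m : ℕ => poch (a + 1) m / (m.factorial : ℝ) * y ^ m)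
      (pochSum (a + 1) y) := (summable_poch (a + 1) y hy).hasSum
  have s1 : HasSum (fun m : ℕ => y * (poch (a + 1) m / (m.factorial : ℝ) * y ^ m))
      (y * pochSum (a + 1) y) := hF1.mul_left y
  set v' : ℕ → ℝ := fun m => if m = 0 then 0 else
    y * (poch (a + 1) (m - 1) / ((m - 1).factorial : ℝ) * y ^ (m - 1)) with hv'
  have s2 : HasSum v' (y * pochSum (a + 1) y) := by
    have heq : (fun n : ℕ => v' (n + 1))
        = fun m : ℕ => y * (poch (a + 1) m / (m.factorial : ℝ) * y ^ m) := by
      funext m; simp [hv']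
    have h : HasSum (fun n : ℕ => v' (n + 1)) (y * pochSum (a + 1) y) := by rw [heq]; exact s1
    have h2 := (hasSum_nat_add_iff (f := v') 1).1 h
    simpa [hv'] using h2
  have s3 := hF1.sub s2
  have heq2 : (fun m : ℕ => poch (a + 1) m / (m.factorial : ℝ) * y ^ m - v' m)
      = fun m : ℕ => poch a m / (m.factorial : ℝ) * y ^ m := by
    funext m
    cases m with
    | zero => simp [hv', poch_zero]
    | succ m =>
      simp only [hv', Nat.succ_ne_zero, if_false, Nat.add_sub_cancel]
      rw [poch_succ (a + 1) m, poch_succ' a m, Nat.factorial_succ, pow_succ]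
      have hfm : (m.factorial : ℝ) ≠ 0 := Nat.cast_ne_zero.2 (Nat.factorial_ne_zero m)
      push_cast
      field_simp
      ring
  rw [heq2] at s3
  rw [show (1 - y) * pochSum (a + 1) y = pochSum (a + 1) y - y * pochSum (a + 1) y by ring]
  exact s3

lemma pochSum_hasDerivAt (a : ℝ) {r : ℝ} (hr0 : 0 < r) (hr1 : r < 1) {y : ℝ}
    (hy : y ∈ Set.Ioo (-r) r) :
    HasDerivAt (fun z : ℝ => pochSum a z) (a * pochSum (a + 1) y) y := by
  have habs : ∀ z ∈ Set.Ioo (-r) r, |z| < 1 := fun z hz =>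
    lt_trans (abs_lt.2 ⟨hz.1, hz.2⟩) hr1
  have h0s : (0:ℝ) ∈ Set.Ioo (-r) r := ⟨by linarith, hr0⟩
  have hshift : ∀ m : ℕ, poch a (m + 1) / ((m + 1).factorial : ℝ) * ((m : ℝ) + 1)
      = a * (poch (a + 1) m / (m.factorial : ℝ)) := by
    intro m
    rw [poch_succ', Nat.factorial_succ]
    have hfm : (m.factorial : ℝ) ≠ 0 := Nat.cast_ne_zero.2 (Nat.factorial_ne_zero m)
    push_cast
    field_simp
  have hbound : ∀ (m : ℕ) (z : ℝ), z ∈ Set.Ioo (-r) r →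
      ‖poch a m / (m.factorial : ℝ) * ((m : ℝ) * z ^ (m - 1))‖
        ≤ |poch a m / (m.factorial : ℝ)| * ((m : ℝ) * r ^ (m - 1)) := by
    intro m z hz
    rw [Real.norm_eq_abs, abs_mul, abs_mul]
    apply mul_le_mul_of_nonneg_left _ (abs_nonneg _)
    rw [abs_of_nonneg (Nat.cast_nonneg' m : (0:ℝ) ≤ (m:ℝ))]
    apply mul_le_mul_of_nonneg_left _ (Nat.cast_nonneg' m)
    rw [abs_pow]
    exact pow_le_pow_left₀ (abs_nonneg z) (le_of_lt (abs_lt.2 ⟨hz.1, hz.2⟩)) _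
  have hu : Summable (fun m : ℕ => |poch a m / (m.factorial : ℝ)| * ((m : ℝ) * r ^ (m - 1))) := by
    apply (summable_nat_add_iff 1).1
    have heq : (fun m : ℕ => |poch a (m + 1) / ((m + 1).factorial : ℝ)| *
          (((m + 1 : ℕ) : ℝ) * r ^ ((m + 1) - 1)))
        = fun m : ℕ => |a| * |poch (a + 1) m / (m.factorial : ℝ) * r ^ m| := by
      funext m
      rw [Nat.add_sub_cancel]
      have e1 : poch a (m + 1) / ((m + 1).factorial : ℝ) * (((m + 1 : ℕ)) : ℝ)
          = a * (poch (a + 1) m / (m.factorial : ℝ)) := by push_cast; exact hshift m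
      calc |poch a (m + 1) / ((m + 1).factorial : ℝ)| * (((m + 1 : ℕ) : ℝ) * r ^ m)
          = |poch a (m + 1) / ((m + 1).factorial : ℝ) * ((m + 1 : ℕ) : ℝ)| * r ^ m := by
            rw [abs_mul, abs_of_nonneg (Nat.cast_nonneg' (m + 1) : (0:ℝ) ≤ ((m + 1 : ℕ) : ℝ))]
            ring
        _ = |a * (poch (a + 1) m / (m.factorial : ℝ))| * r ^ m := by rw [e1]
        _ = |a| * |poch (a + 1) m / (m.factorial : ℝ) * r ^ m| := by
            rw [abs_mul, abs_mul, abs_of_nonneg (pow_nonneg hr0.le m)]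
            ring
    rw [heq]
    exact ((summable_poch (a + 1) r (by rwa [abs_of_pos hr0])).abs).mul_left |a|
  have hsum0 : Summable (fun m : ℕ => poch a m / (m.factorial : ℝ) * (0:ℝ) ^ m) :=
    summable_poch a 0 (by norm_num)
  have hD := hasDerivAt_tsum_of_isPreconnected hu isOpen_Ioo
    (convex_Ioo (-r) r).isPreconnected
    (fun m z _ => (hasDerivAt_pow m z).const_mul (poch a m / (m.factorial : ℝ)))
    hbound h0s hsum0 hy
  have hDsummable : Summable (fun m : ℕ =>
      poch a m / (m.factorial : ℝ) * ((m : ℝ) * y ^ (m - 1))) :=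
    Summable.of_norm_bounded hu (fun m => hbound m y hy)
  have htsum : (∑' m : ℕ, poch a m / (m.factorial : ℝ) * ((m : ℝ) * y ^ (m - 1)))
      = a * pochSum (a + 1) y := by
    rw [Summable.tsum_eq_zero_add hDsummable]
    simp only [Nat.cast_zero, zero_mul, mul_zero, zero_add]
    have heq2 : (fun m : ℕ => poch a (m + 1) / ((m + 1).factorial : ℝ) *
          (((m + 1 : ℕ) : ℝ) * y ^ ((m + 1) - 1)))
        = fun m : ℕ => a * (poch (a + 1) m / (m.factorial : ℝ) * y ^ m) := by
      funext m
      rw [Nat.add_sub_cancel, ← mul_assoc]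
      push_cast
      rw [hshift m]
      ring
    rw [heq2, tsum_mul_left]
    rfl
  rw [htsum] at hD
  exact hD

theorem binom_hasSum (a t : ℝ) (ht : |t| < 1) :
    HasSum (fun m : ℕ => poch a m / (m.factorial : ℝ) * t ^ m) ((1 - t) ^ (-a)) := by
  set r : ℝ := (1 + |t|) / 2 with hr
  have ht0 : 0 ≤ |t| := abs_nonneg t
  have hr1 : r < 1 := by rw [hr]; linarith
  have htr : |t| < r := by rw [hr]; linarith
  have hr0 : 0 < r := by rw [hr]; linarith
  have hts : t ∈ Set.Ioo (-r) r := by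
    have := abs_lt.1 htr
    exact ⟨this.1, this.2⟩
  have h0s : (0:ℝ) ∈ Set.Ioo (-r) r := ⟨by linarith, hr0⟩
  have habs : ∀ z ∈ Set.Ioo (-r) r, |z| < 1 := fun z hz =>
    lt_trans (abs_lt.2 ⟨hz.1, hz.2⟩) hr1
  have hGd : ∀ y ∈ Set.Ioo (-r) r,
      HasDerivAt (fun z : ℝ => pochSum a z * (1 - z) ^ a) 0 y := by
    intro y hy
    have h1y : 0 < 1 - y := by
      have := (abs_lt.1 (habs y hy)).2
      linarith
    have hF := pochSum_hasDerivAt a hr0 hr1 hy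
    have hR : HasDerivAt (fun z : ℝ => (1 - z) ^ a) (-1 * a * (1 - y) ^ (a - 1)) y := by
      have := HasDerivAt.rpow_const (p := a) ((hasDerivAt_id y).const_sub 1)
        (Or.inl (ne_of_gt h1y))
      simpa using this
    have hprod := hF.mul hR
    refine HasDerivAt.congr_deriv hprod ?_
    have hrec : pochSum a y = (1 - y) * pochSum (a + 1) y :=
      (pochSum_rec a y (habs y hy)).tsum_eq
    have hpow : (1 - y) ^ a = (1 - y) ^ (a - 1) * (1 - y) := by
      rw [← Real.rpow_add_one (ne_of_gt h1y) (a - 1)]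
      norm_num
    rw [hrec, hpow]
    ring
  have hconst : pochSum a t * (1 - t) ^ a = pochSum a 0 * (1 - 0 : ℝ) ^ a := by
    apply Convex.is_const_of_fderivWithin_eq_zero (𝕜 := ℝ) (convex_Ioo (-r) r)
      (fun y hy => ((hGd y hy).differentiableAt).differentiableWithinAt)
      _ hts h0s
    intro y hy
    rw [fderivWithin_of_isOpen isOpen_Ioo hy, (hGd y hy).hasFDerivAt.fderiv]
    ext
    simp
  rw [pochSum_zero] at hconst
  norm_num [Real.one_rpow] at hconst
  have h1t : 0 < 1 - t := by
    have := (abs_lt.1 ht).2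
    linarith
  have hne : (1 - t) ^ a ≠ 0 := (Real.rpow_pos_of_pos h1t a).ne'
  have hval : pochSum a t = (1 - t) ^ (-a) := by
    rw [Real.rpow_neg h1t.le]
    field_simp
    linarith [hconst]
  have := (summable_poch a t ht).hasSum
  rwa [show (∑' m : ℕ, poch a m / (m.factorial : ℝ) * t ^ m) = (1 - t) ^ (-a) from hval] at this


/-- coefficient of the terminating hypergeometric sum -/
def chg (α β : ℝ) (x : ℕ) (j : ℕ) : ℝ :=
  (-1 : ℝ) ^ j * poch (-(x : ℝ)) j * poch ((x : ℝ) + α + β + 1) j /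
    (poch (α + 1) j * (j.factorial : ℝ))

lemma chg_eq_zero (α β : ℝ) (x j : ℕ) (h : x < j) : chg α β x j = 0 := by
  rw [chg, poch_neg_nat, Nat.descFactorial_eq_zero_iff_lt.2 h]
  simp

lemma dualHahn_eval (α β N : ℝ) (hP : ∀ j : ℕ, poch (α + 1) j ≠ 0) (x n : ℕ) :
    (dualHahn α β N n).eval (lam α β x)
      = ∑ j ∈ Finset.range (x + 1), chg α β x j *
          (if j ≤ n then poch (-N + j) (n - j) / ((n - j).factorial : ℝ) else 0) := by
  have hprod : ∀ j : ℕ, ∏ i ∈ Finset.range j, (lam α β x - (i : ℝ) * (α + β + 1 + i))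
      = (-1 : ℝ) ^ j * poch (-(x : ℝ)) j * poch ((x : ℝ) + α + β + 1) j := by
    intro j
    have : ∀ i ∈ Finset.range j, lam α β x - (i : ℝ) * (α + β + 1 + i)
        = (-1) * ((-(x : ℝ)) + i) * (((x : ℝ) + α + β + 1) + i) := by
      intro i _; rw [lam]; ring
    rw [Finset.prod_congr rfl this, Finset.prod_mul_distrib, Finset.prod_mul_distrib,
      Finset.prod_const, poch, poch, Finset.card_range]
  have heval : (dualHahn α β N n).eval (lam α β x)
      = ∑ j ∈ Finset.range (n + 1), (n.factorial : ℝ)⁻¹ *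
          (((-1 : ℝ) ^ j * poch (-(n : ℝ)) j * poch (-N + j) (n - j)
            / (poch (α + 1) j * (j.factorial : ℝ))) *
          ((-1 : ℝ) ^ j * poch (-(x : ℝ)) j * poch ((x : ℝ) + α + β + 1) j)) := by
    rw [dualHahn, eval_mul, eval_C, eval_finset_sum, Finset.mul_sum]
    congr 1
    funext j
    rw [eval_mul, eval_C, eval_prod]
    congr 2
    rw [← hprod j]
    apply Finset.prod_congr rfl
    intro i _
    rw [eval_sub, eval_X, eval_C]
  rw [heval]
  set M := max n x with hM
  have hsub1 : Finset.range (n + 1) ⊆ Finset.range (M + 1) :=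
    Finset.range_subset_range.2 (by omega)
  have hsub2 : Finset.range (x + 1) ⊆ Finset.range (M + 1) :=
    Finset.range_subset_range.2 (by omega)
  rw [Finset.sum_subset hsub1 (fun j _ hj => by
    simp only [Finset.mem_range, not_lt] at hj
    have : poch (-(n : ℝ)) j = 0 := by
      rw [poch_neg_nat, Nat.descFactorial_eq_zero_iff_lt.2 (by omega)]; simp
    rw [this]; ring)]
  rw [Finset.sum_subset hsub2 (fun j _ hj => by
    simp only [Finset.mem_range, not_lt] at hj
    rw [chg_eq_zero α β x j (by omega)]; ring)]
  apply Finset.sum_congr rfl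
  intro j hj
  by_cases hjn : j ≤ n
  · rw [if_pos hjn]
    rw [chg, poch_neg_nat n j]
    have hd : ((n - j).factorial : ℝ) * (n.descFactorial j : ℝ) = (n.factorial : ℝ) := by
      exact_mod_cast congrArg (Nat.cast : ℕ → ℝ) (Nat.factorial_mul_descFactorial hjn)
    have hfn : (n.factorial : ℝ) ≠ 0 := Nat.cast_ne_zero.2 (Nat.factorial_ne_zero n)
    have hfnj : ((n - j).factorial : ℝ) ≠ 0 := Nat.cast_ne_zero.2 (Nat.factorial_ne_zero _)
    have hfj : (j.factorial : ℝ) ≠ 0 := Nat.cast_ne_zero.2 (Nat.factorial_ne_zero j)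
    simp only [show α + 1 = 1 + α from by ring]
    have hPj : poch (1 + α) j ≠ 0 := by
      rw [show (1 : ℝ) + α = α + 1 from by ring]; exact hP j
    have hsq : (-1 : ℝ) ^ j * (-1 : ℝ) ^ j = 1 := by
      rw [← pow_add, ← two_mul, pow_mul]; simp
    field_simp
    ring_nf
    have h3 : (-1 : ℝ) ^ (j * 3) = (-1) ^ j := by
      rw [pow_mul]
      have : ((-1 : ℝ) ^ j) ^ 3 = ((-1 : ℝ) ^ j) ^ 2 * (-1) ^ j := by ring
      rw [this, ← pow_mul, mul_comm j 2, pow_mul]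
      simp
    rw [show (-1 : ℝ) ^ (j * 2) = 1 by rw [mul_comm, pow_mul]; simp]
    linear_combination (poch (-N + (j:ℝ)) (n - j) * poch (-(x:ℝ)) j *
      poch (1 + (x:ℝ) + α + β) j) * hd
  · rw [if_neg hjn]
    have : poch (-(n : ℝ)) j = 0 := by
      rw [poch_neg_nat, Nat.descFactorial_eq_zero_iff_lt.2 (by omega)]; simp
    rw [this]; ring

lemma sum_tri (n : ℕ) (f : ℕ → ℕ → ℝ) :
    ∑ j ∈ Finset.range (n + 1), ∑ i ∈ Finset.range (n + 1 - j), f j i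
      = ∑ k ∈ Finset.range (n + 1), ∑ j ∈ Finset.range (k + 1), f j (k - j) := by
  rw [Finset.sum_sigma', Finset.sum_sigma']
  apply Finset.sum_nbij' (i := fun p => (⟨p.1 + p.2, p.1⟩ : Σ _ : ℕ, ℕ))
    (j := fun p => (⟨p.2, p.1 - p.2⟩ : Σ _ : ℕ, ℕ))
  all_goals rintro ⟨u, v⟩ hp
  all_goals simp only [Finset.mem_sigma, Finset.mem_range] at hp ⊢
  all_goals first
    | omega
    | (simp only [Sigma.mk.inj_iff, heq_eq_eq]; omega)
    | (simp only [Nat.add_sub_cancel_left])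
    | (rw [show v + (u - v) = u from by omega])

lemma poly_id (α β : ℝ) (hP : ∀ j : ℕ, poch (α + 1) j ≠ 0) (x : ℕ) (t : ℝ) :
    ∑ j ∈ Finset.range (x + 1), chg α β x j * t ^ j * (1 - t) ^ (x - j)
      = ∑ k ∈ Finset.range (x + 1),
          poch (-(x : ℝ)) k * poch (-(x : ℝ) - β) k /
            (poch (α + 1) k * (k.factorial : ℝ)) * t ^ k := by
  have hbin : ∀ j ∈ Finset.range (x + 1), chg α β x j * t ^ j * (1 - t) ^ (x - j)
      = ∑ i ∈ Finset.range (x + 1 - j),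
          chg α β x j * ((-1 : ℝ) ^ i * (((x - j).choose i : ℕ) : ℝ)) * t ^ (j + i) := by
    intro j hj
    simp only [Finset.mem_range] at hj
    have h1 : (1 - t : ℝ) ^ (x - j) = ∑ i ∈ Finset.range ((x - j) + 1),
        (-t) ^ i * 1 ^ ((x - j) - i) * ((x - j).choose i : ℝ) := by
      rw [← add_pow]
      ring_nf
    have h2 : (x - j) + 1 = x + 1 - j := by omega
    rw [h1, h2, Finset.mul_sum]
    apply Finset.sum_congr rfl
    intro i hi
    rw [one_pow, neg_pow, pow_add]
    ring
  rw [Finset.sum_congr rfl hbin, sum_tri x (fun j i =>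
    chg α β x j * ((-1 : ℝ) ^ i * (((x - j).choose i : ℕ) : ℝ)) * t ^ (j + i))]
  apply Finset.sum_congr rfl
  intro k hk
  simp only [Finset.mem_range] at hk
  have hone : ∀ j ∈ Finset.range (k + 1),
      chg α β x j * ((-1 : ℝ) ^ (k - j) * (((x - j).choose (k - j) : ℕ) : ℝ)) * t ^ (j + (k - j))
        = (chg α β x j * ((-1 : ℝ) ^ (k - j) * (((x - j).choose (k - j) : ℕ) : ℝ))) * t ^ k := by
    intro j hj
    simp only [Finset.mem_range] at hj
    rw [show j + (k - j) = k by omega]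
  rw [Finset.sum_congr rfl hone, ← Finset.sum_mul]
  rw [show (∑ j ∈ Finset.range (k + 1),
      chg α β x j * ((-1 : ℝ) ^ (k - j) * (((x - j).choose (k - j) : ℕ) : ℝ)))
    = poch (-(x : ℝ)) k * poch (-(x : ℝ) - β) k / (poch (α + 1) k * (k.factorial : ℝ)) from
    coeff_id α β hP x k (by omega)]


/-- Generating function for dual Hahn polynomials:
`Σ_{n≥0} R_n^{α,β,N}(λ(x)) tⁿ = (1−t)^{N−x} ₂F₁(−x,−x−β;α+1;t)` for `|t| < 1` and
`x` a nonnegative integer, `N` not a nonnegative integer. -/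
theorem dualHahn_generating_function (α β N : ℝ) (hα : ∀ k : ℕ, α ≠ -1 - k)
    (hN : ∀ k : ℕ, N ≠ k) (x : ℕ) (t : ℝ) (ht : |t| < 1) :
    HasSum (fun n : ℕ => (dualHahn α β N n).eval (lam α β x) * t ^ n)
      ((1 - t) ^ (N - (x : ℝ)) *
        ∑ k ∈ Finset.range (x + 1),
          poch (-(x : ℝ)) k * poch (-(x : ℝ) - β) k /
            (poch (α + 1) k * (k.factorial : ℝ)) * t ^ k) := by
  have hP : ∀ j : ℕ, poch (α + 1) j ≠ 0 := by
    intro j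
    apply Finset.prod_ne_zero_iff.2
    intro i _ h0
    exact hα i (by linarith)
  have h1t : 0 < 1 - t := by
    have := (abs_lt.1 ht).2
    linarith
  set F : ℕ → ℕ → ℝ := fun j n => chg α β x j * t ^ j *
    (if j ≤ n then poch (-N + j) (n - j) / ((n - j).factorial : ℝ) * t ^ (n - j) else 0)
    with hF
  have hFeq : ∀ n : ℕ, (dualHahn α β N n).eval (lam α β x) * t ^ n
      = ∑ j ∈ Finset.range (x + 1), F j n := by
    intro n
    rw [dualHahn_eval α β N hP x n, Finset.sum_mul]
    apply Finset.sum_congr rfl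
    intro j _
    by_cases hjn : j ≤ n
    · rw [hF]
      simp only [if_pos hjn]
      have hpow : t ^ j * t ^ (n - j) = t ^ n := by
        rw [← pow_add]
        congr 1
        omega
      calc chg α β x j * (poch (-N + j) (n - j) / ((n - j).factorial : ℝ)) * t ^ n
          = chg α β x j * (poch (-N + j) (n - j) / ((n - j).factorial : ℝ)) *
              (t ^ j * t ^ (n - j)) := by rw [hpow]
        _ = chg α β x j * t ^ j *
              (poch (-N + j) (n - j) / ((n - j).factorial : ℝ) * t ^ (n - j)) := by ring
    · rw [hF]
      simp only [if_neg hjn]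
      ring
  have hjsum : ∀ j ∈ Finset.range (x + 1),
      HasSum (F j) (chg α β x j * t ^ j * (1 - t) ^ (N - (j : ℝ))) := by
    intro j _
    have hb := binom_hasSum (-N + (j : ℝ)) t ht
    rw [show -(-N + (j : ℝ)) = N - (j : ℝ) from by ring] at hb
    have hinj : Function.Injective (fun m : ℕ => m + j) := fun a b h => by
      simpa using h
    have hzero : ∀ n : ℕ, n ∉ Set.range (fun m : ℕ => m + j) →
        (fun n : ℕ => if j ≤ n then poch (-N + j) (n - j) / ((n - j).factorial : ℝ) * t ^ (n - j)
          else 0) n = 0 := by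
      intro n hn
      have : ¬ j ≤ n := by
        intro hle
        exact hn ⟨n - j, by show n - j + j = n; omega⟩
      simp [this]
    have hcomp : ((fun n : ℕ => if j ≤ n then poch (-N + j) (n - j) / ((n - j).factorial : ℝ) *
          t ^ (n - j) else 0) ∘ (fun m : ℕ => m + j))
        = fun m : ℕ => poch (-N + (j : ℝ)) m / (m.factorial : ℝ) * t ^ m := by
      funext m
      simp only [Function.comp_apply, Nat.add_sub_cancel, if_pos (Nat.le_add_left j m)]
    have hshift : HasSum (fun n : ℕ => if j ≤ n then
        poch (-N + j) (n - j) / ((n - j).factorial : ℝ) * t ^ (n - j) else 0)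
        ((1 - t) ^ (N - (j : ℝ))) := by
      rw [← Function.Injective.hasSum_iff hinj hzero, hcomp]
      exact hb
    exact hshift.mul_left (chg α β x j * t ^ j)
  have htotal := hasSum_sum hjsum
  have hval : (∑ j ∈ Finset.range (x + 1), chg α β x j * t ^ j * (1 - t) ^ (N - (j : ℝ)))
      = (1 - t) ^ (N - (x : ℝ)) *
        ∑ k ∈ Finset.range (x + 1),
          poch (-(x : ℝ)) k * poch (-(x : ℝ) - β) k /
            (poch (α + 1) k * (k.factorial : ℝ)) * t ^ k := by
    have hstep : ∀ j ∈ Finset.range (x + 1),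
        chg α β x j * t ^ j * (1 - t) ^ (N - (j : ℝ))
          = (1 - t) ^ (N - (x : ℝ)) * (chg α β x j * t ^ j * (1 - t) ^ (x - j : ℕ)) := by
      intro j hj
      simp only [Finset.mem_range] at hj
      have : (1 - t : ℝ) ^ (N - (j : ℝ)) = (1 - t) ^ (N - (x : ℝ)) * (1 - t) ^ (x - j : ℕ) := by
        rw [← Real.rpow_natCast (1 - t) (x - j), ← Real.rpow_add h1t]
        congr 1
        push_cast [Nat.cast_sub (show j ≤ x by omega)]
        ring
      rw [this]
      ring
    rw [Finset.sum_congr rfl hstep, ← Finset.mul_sum, poly_id α β hP x t]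
  rw [← hval]
  have hfun : (fun n : ℕ => (dualHahn α β N n).eval (lam α β x) * t ^ n)
      = fun n : ℕ => ∑ j ∈ Finset.range (x + 1), F j n := funext hFeq
  rw [hfun]
  exact htotal


end
end

section
/- Let N be a positive integer and α, β real numbers with α ∉ {−1,−2,−3,…}. Then for every integer n ≥ N+1, the polynomial ∏_{i=0}^{N} (λ − i(α+β+1+i)) divides R_n^{α,β,N}(λ) in ℝ[λ]; in particular, R_n^{α,β,N}(λ^{α,β}(i)) = 0 for every integer 0 ≤ i ≤ N, where λ^{α,β}(x) = x(x+α+β+1). -/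
open Polynomial Finset

noncomputable section

lemma poch_zero_of (N j n : ℕ) (hj : j ≤ N) (hNn : N < n) :
    poch (-(N : ℝ) + j) (n - j) = 0 := by
  apply Finset.prod_eq_zero (i := N - j)
  · exact Finset.mem_range.mpr (Nat.sub_lt_sub_right hj hNn)
  · have : ((N - j : ℕ) : ℝ) = (N : ℝ) - j := by
      push_cast [Nat.cast_sub hj]; ring
    rw [this]; ring

/-- For `N` a positive integer and `n ≥ N+1`, the dual Hahn polynomial `R_n^{α,β,N}` is
divisible by `∏_{i=0}^{N}(λ − i(α+β+1+i))`; in particular it vanishes at the points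
`λ^{α,β}(i)`, `0 ≤ i ≤ N`, of the quadratic lattice. -/
theorem dualHahn_divisibility (N : ℕ) (hN : 0 < N) (α β : ℝ) (hα : ∀ k : ℕ, α ≠ -1 - k)
    (n : ℕ) (hn : N + 1 ≤ n) :
    (∏ i ∈ Finset.range (N + 1), (Polynomial.X - Polynomial.C ((i : ℝ) * (α + β + 1 + i)))) ∣
        dualHahn α β N n ∧
      ∀ i : ℕ, i ≤ N → (dualHahn α β N n).eval (lam α β i) = 0 := by
  have hNn : N < n := hn
  set P := ∏ i ∈ Finset.range (N + 1),
      (Polynomial.X - Polynomial.C ((i : ℝ) * (α + β + 1 + i))) with hP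
  have hdvd : P ∣ dualHahn α β N n := by
    unfold dualHahn
    apply Dvd.dvd.mul_left
    apply Finset.dvd_sum
    intro j hj
    rcases le_or_gt j N with h | h
    · rw [poch_zero_of N j n h hNn]
      simp
    · apply Dvd.dvd.mul_left
      have : (∏ i ∈ Finset.range j,
          (Polynomial.X - Polynomial.C ((i : ℝ) * (α + β + 1 + i)))) =
          P * ∏ i ∈ Finset.Ico (N + 1) j,
            (Polynomial.X - Polynomial.C ((i : ℝ) * (α + β + 1 + i))) := by
        rw [hP, Finset.prod_range_mul_prod_Ico _ h]
      rw [this]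
      exact Dvd.intro _ rfl
  refine ⟨hdvd, fun i hi => ?_⟩
  obtain ⟨q, hq⟩ := hdvd
  have hPeval : P.eval (lam α β i) = 0 := by
    rw [hP, Polynomial.eval_prod]
    apply Finset.prod_eq_zero (i := i)
    · exact Finset.mem_range.mpr (Nat.lt_succ_of_le hi)
    · simp [lam]; ring
  rw [hq, Polynomial.eval_mul, hPeval, zero_mul]

end
end
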